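/- Fix n and α with α·β = n. For each divisor k_s of α with k_s ≠ α, the number of valid choices of first-rift size k_r (i.e., k_r > 0 with k_s | k_r and (k_s + k_r) | k_s·β) is exactly σ₀(β) − 1, where σ₀ is the number-of-divisors function. -/
import Mathlib


open Finset

/-- For each divisor `k_s ≠ α` of `α`, the number of valid first-rift sizes `k_r`
(positive, divisible by `k_s`, with `k_s + k_r` dividing `k_s·β`) is exactly
`σ₀(β) − 1`. -/
theorem count_valid_rift_sizes (n α β ks : ℕ) (hα : 0 < α) (hβ : 0 < β)
    (hn : α * β = n) (hdvd : ks ∣ α) (hne : ks ≠ α) (hks : 0 < ks) :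
    ((Finset.range (ks * β + 1)).filter
        (fun kr => 0 < kr ∧ ks ∣ kr ∧ (ks + kr) ∣ ks * β)).card =
      β.divisors.card - 1 := by
  have h1 : (1:ℕ) ∈ β.divisors := Nat.one_mem_divisors.mpr hβ.ne'
  rw [← Finset.card_erase_of_mem h1]
  apply Finset.card_bij (fun kr _ => kr / ks + 1)
  · intro kr hkr
    simp only [Finset.mem_filter, Finset.mem_range] at hkr
    obtain ⟨hr, hpos, ⟨m, rfl⟩, hdvd2⟩ := hkr
    rw [Nat.mul_div_cancel_left m hks]
    have hmd : (m + 1) ∣ β := by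
      have h2 : ks * (m + 1) ∣ ks * β := by
        rw [mul_add, mul_one, add_comm]; exact hdvd2
      exact (mul_dvd_mul_iff_left hks.ne').mp h2
    have hm0 : 0 < m := Nat.pos_of_ne_zero (by rintro rfl; simp at hpos)
    exact Finset.mem_erase.mpr ⟨by omega, Nat.mem_divisors.mpr ⟨hmd, hβ.ne'⟩⟩
  · intro a ha b hb hab
    simp only [Finset.mem_filter, Finset.mem_range] at ha hb
    obtain ⟨-, -, ⟨m, rfl⟩, -⟩ := ha
    obtain ⟨-, -, ⟨m', rfl⟩, -⟩ := hb
    rw [Nat.mul_div_cancel_left m hks, Nat.mul_div_cancel_left m' hks] at hab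
    have : m = m' := by omega
    rw [this]
  · intro d hd
    simp only [Finset.mem_erase, Nat.mem_divisors] at hd
    obtain ⟨hd1, hdβ, -⟩ := hd
    have hdpos : 0 < d := Nat.pos_of_dvd_of_pos hdβ hβ
    have hdle : d ≤ β := Nat.le_of_dvd hβ hdβ
    refine ⟨ks * (d - 1), ?_, ?_⟩
    · simp only [Finset.mem_filter, Finset.mem_range]
      refine ⟨Nat.lt_succ_of_le (Nat.mul_le_mul_left _ (by omega)), Nat.mul_pos hks (by omega), Dvd.intro _ rfl, ?_⟩
      have : ks + ks * (d - 1) = ks * d := by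
        rw [add_comm, ← Nat.mul_succ]; congr 1; omega
      rw [this]
      exact mul_dvd_mul_left ks hdβ
    · rw [Nat.mul_div_cancel_left _ hks]; omega
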